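/- arXiv:1106.1879 — 3 statements merged into one kernel-verified Lean document; each statement's English description precedes it below -/
import Mathlib

section
/- For every general source Y = {Yⁿ}ₙ₌₁^∞ and every δ with 0 ≤ δ < 2, the δ-intrinsic randomness satisfies S_ι(δ|Y) = sup{ R ∈ ℝ : G(R) ≤ δ/2 }, where G(R) = limsup_{n→∞} Pr{ (1/n) log(1/P_{Yⁿ}(Yⁿ)) ≤ R }. -/
open Filter MeasureTheory
open scoped BigOperators

noncomputable section

/-- Probability of a set under a probability mass function. -/
def prb {α : Type*} (P : α → ℝ) (s : Set α) : ℝ := ∑' a, s.indicator P a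

/-- Variational distance between two mass functions on the same countable set. -/
def varDist {α : Type*} (P Q : α → ℝ) : ℝ := ∑' a, |P a - Q a|

/-- `P` is a probability mass function. -/
def IsPMF {α : Type*} (P : α → ℝ) : Prop := (∀ a, 0 ≤ P a) ∧ HasSum P 1

/-- Pushforward of a mass function through a map. -/
def pushMap {α β : Type*} (P : α → ℝ) (φ : α → β) : β → ℝ :=
  fun b => ∑' a, Set.indicator {a | φ a = b} P a

/-- The uniform mass function on `Fin M`. -/
def unif (M : ℕ) : Fin M → ℝ := fun _ => 1 / (M : ℝ)

section Helpers

variable {α : Type*}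

lemma prb_nonneg (P : α → ℝ) (h0 : ∀ a, 0 ≤ P a) (s : Set α) : 0 ≤ prb P s :=
  tsum_nonneg fun a => Set.indicator_nonneg (fun x _ => h0 x) a

lemma prb_le_one {P : α → ℝ} (h0 : ∀ a, 0 ≤ P a) (h1 : HasSum P 1) (s : Set α) :
    prb P s ≤ 1 := by
  have h := Summable.tsum_le_tsum (f := s.indicator P) (g := P)
    (fun a => Set.indicator_le_self' (fun x _ => h0 x) a)
    (h1.summable.indicator s) h1.summable
  simpa [prb, h1.tsum_eq] using h

lemma prb_mono {P : α → ℝ} (h0 : ∀ a, 0 ≤ P a) (hP : Summable P) {s t : Set α}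
    (hst : s ⊆ t) : prb P s ≤ prb P t :=
  Summable.tsum_le_tsum (fun a => Set.indicator_le_indicator_of_subset hst h0 a)
    (hP.indicator s) (hP.indicator t)

lemma prb_empty (P : α → ℝ) : prb P (∅ : Set α) = 0 := by
  simp [prb]

lemma hasSum_pushMap {β : Type*} [Fintype β] {P : α → ℝ} (h1 : HasSum P 1) (φ : α → β) :
    HasSum (pushMap P φ) 1 := by
  classical
  have hsum : ∀ b : β, Summable fun a => Set.indicator {a' | φ a' = b} P a :=
    fun b => h1.summable.indicator _
  have key : ∑ b : β, pushMap P φ b = 1 := by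
    have h2 : ∑ b : β, pushMap P φ b
        = ∑' a, ∑ b : β, Set.indicator {a' | φ a' = b} P a := by
      rw [Summable.tsum_finsetSum (fun b _ => hsum b)]; rfl
    rw [h2]
    have h3 : ∀ a, (∑ b : β, Set.indicator {a' | φ a' = b} P a) = P a := by
      intro a
      have : ∀ b : β, Set.indicator {a' | φ a' = b} P a = if φ a = b then P a else 0 := by
        intro b; simp [Set.indicator_apply]
      simp only [this]
      rw [Finset.sum_ite_eq Finset.univ (φ a) (fun _ => P a)]
      simp
    simp only [h3]
    exact h1.tsum_eq
  have := hasSum_fintype (pushMap P φ)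
  rwa [key] at this

lemma varDist_nonneg (P Q : α → ℝ) : 0 ≤ varDist P Q :=
  tsum_nonneg fun a => abs_nonneg _

lemma varDist_le_two {P Q : α → ℝ} (hP0 : ∀ a, 0 ≤ P a) (hP1 : HasSum P 1)
    (hQ0 : ∀ a, 0 ≤ Q a) (hQ1 : HasSum Q 1) : varDist P Q ≤ 2 := by
  have hle : ∀ a, |P a - Q a| ≤ P a + Q a := by
    intro a
    rw [abs_sub_le_iff]
    constructor <;> nlinarith [hP0 a, hQ0 a]
  have hsum : Summable fun a => |P a - Q a| := (hP1.summable.sub hQ1.summable).abs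
  have h := Summable.tsum_le_tsum hle hsum (hP1.summable.add hQ1.summable)
  have h2 : (∑' a, (P a + Q a)) = 2 := by
    rw [(hP1.add hQ1).tsum_eq]; norm_num
  calc varDist P Q ≤ ∑' a, (P a + Q a) := h
  _ = 2 := h2

lemma varDist_fin {M : ℕ} (p q : Fin M → ℝ) : varDist p q = ∑ b : Fin M, |p b - q b| :=
  tsum_fintype _

lemma pushMap_one {M : ℕ} {P : α → ℝ} (h1 : HasSum P 1) (b : Fin 1) :
    pushMap P (fun _ => (0 : Fin 1)) b = 1 := by
  have : {a : α | (0 : Fin 1) = b} = Set.univ := by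
    ext a; simp [Subsingleton.elim (0 : Fin 1) b]
  simp [pushMap, this, Set.indicator_univ, h1.tsum_eq]

lemma tendsto_exp_neg_mul {c : ℝ} (hc : 0 < c) :
    Tendsto (fun n : ℕ => Real.exp (-((n : ℝ) * c))) atTop (nhds 0) := by
  apply Real.tendsto_exp_atBot.comp
  apply tendsto_neg_atBot_iff.mpr
  exact Tendsto.atTop_mul_const hc tendsto_natCast_atTop_atTop

end Helpers

def ellQ (Q : ℕ → ℝ) (k : ℕ) : ℝ := ∑ j ∈ Finset.range k, Q j

def gfun (M i : ℕ) (t : ℝ) : ℝ := min t (((i : ℝ) + 1) / M) - min t ((i : ℝ) / M)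

def psiFun (M : ℕ) (hM : 0 < M) (Q : ℕ → ℝ) (k : ℕ) : Fin M :=
  ⟨min ⌊(M : ℝ) * ellQ Q k⌋₊ (M - 1), by omega⟩

lemma min_supermod {s t u v : ℝ} (hst : s ≤ t) (huv : u ≤ v) :
    min s v + min t u ≤ min s u + min t v := by
  simp only [min_def]; split_ifs <;> linarith

lemma gfun_mono (M i : ℕ) (hM : 0 < M) : Monotone (gfun M i) := by
  intro s t hst
  have huv : ((i : ℝ)) / M ≤ ((i : ℝ) + 1) / M := by
    have hMR : (0:ℝ) < M := by exact_mod_cast hM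
    gcongr; linarith
  have := min_supermod hst huv
  simp only [gfun]; linarith

lemma direct_bound {M : ℕ} (hM : 0 < M) (Q : ℕ → ℝ) (hQ0 : ∀ k, 0 ≤ Q k)
    (hQ1 : HasSum Q 1) {a : ℝ} (ha : 0 < a) :
    varDist (unif M) (pushMap Q (psiFun M hM Q)) ≤ 2 * prb Q {k | a < Q k} + 2 * M * a := by
  classical
  have hMR : (0 : ℝ) < M := by exact_mod_cast hM
  set ψ := psiFun M hM Q with hψdef
  set ℓ := ellQ Q with hldef
  have hl0 : ℓ 0 = 0 := by simp [hldef, ellQ]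
  have hlsucc : ∀ k, ℓ (k + 1) = ℓ k + Q k := by
    intro k; simp [hldef, ellQ, Finset.sum_range_succ]
  have hlmono : Monotone ℓ := by
    intro k m hkm
    exact Finset.sum_le_sum_of_subset_of_nonneg (Finset.range_subset_range.mpr hkm)
      (fun j _ _ => hQ0 j)
  have hlnn : ∀ k, 0 ≤ ℓ k := fun k => Finset.sum_nonneg fun j _ => hQ0 j
  have hl1 : ∀ k, ℓ k ≤ 1 := fun k => sum_le_hasSum _ (fun j _ => hQ0 j) hQ1
  have hltend : Tendsto ℓ atTop (nhds 1) := hQ1.tendsto_sum_nat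
  -- o and q
  set o : ℕ → ℕ → ℝ := fun k i => gfun M i (ℓ (k + 1)) - gfun M i (ℓ k) with hodef
  set q : ℕ → Fin M → ℝ := fun k b => Set.indicator {k' | ψ k' = b} Q k with hqdef
  have hqn : ∀ k b, q k b = if ψ k = b then Q k else 0 := by
    intro k b; simp [hqdef, Set.indicator_apply]
  have ho_nn : ∀ k i, 0 ≤ o k i := by
    intro k i
    exact sub_nonneg.mpr (gfun_mono M i hM (hlmono (Nat.le_succ k)))
  have hq_nn : ∀ k b, 0 ≤ q k b := by
    intro k b; rw [hqn]; split <;> simp [hQ0 k]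
  have hq_summable : ∀ b, Summable fun k => q k b := fun b => hQ1.summable.indicator _
  -- g values
  have hg0 : ∀ i, gfun M i 0 = 0 := by
    intro i
    have h1 : (0:ℝ) ≤ ((i : ℝ) + 1) / M := by positivity
    have h2 : (0:ℝ) ≤ (i : ℝ) / M := by positivity
    simp [gfun, min_eq_left h1, min_eq_left h2]
  have hg1 : ∀ i < M, gfun M i 1 = 1 / M := by
    intro i hi
    have h1 : ((i : ℝ) + 1) / M ≤ 1 := by
      rw [div_le_one hMR]; exact_mod_cast Nat.succ_le_of_lt hi
    have h2 : (i : ℝ) / M ≤ 1 := le_trans (by gcongr; linarith) h1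
    rw [gfun, min_eq_right h1, min_eq_right h2]
    field_simp
    ring
  -- partial sums over k
  have hpartial : ∀ i K, ∑ k ∈ Finset.range K, o k i = gfun M i (ℓ K) := by
    intro i K
    have := Finset.sum_range_sub (fun k => gfun M i (ℓ k)) K
    rw [hodef]
    simpa [hl0, hg0 i] using this
  have ho_partial_le : ∀ i, i < M → ∀ K, ∑ k ∈ Finset.range K, o k i ≤ 1 / M := by
    intro i hi K
    rw [hpartial i K, ← hg1 i hi]
    exact gfun_mono M i hM (hl1 K)
  have ho_summable : ∀ i, i < M → Summable fun k => o k i := by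
    intro i hi
    exact summable_of_sum_range_le (fun k => ho_nn k i) (ho_partial_le i hi)
  have ho_hasSum : ∀ i, i < M → HasSum (fun k => o k i) (1 / M) := by
    intro i hi
    rw [(ho_summable i hi).hasSum_iff_tendsto_nat]
    have hcont : Continuous (gfun M i) :=
      (continuous_id.min continuous_const).sub (continuous_id.min continuous_const)
    have h1 : Tendsto (fun K => gfun M i (ℓ K)) atTop (nhds (gfun M i 1)) :=
      (hcont.tendsto 1).comp hltend
    rw [hg1 i hi] at h1
    exact h1.congr (fun K => (hpartial i K).symm)
  -- sum over i of o k i equals Q k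
  have hosum_k : ∀ k, ∑ b : Fin M, o k b.val = Q k := by
    intro k
    rw [Fin.sum_univ_eq_sum_range (fun i => o k i) M]
    have htel : ∀ t : ℝ, 0 ≤ t → t ≤ 1 → ∑ i ∈ Finset.range M, gfun M i t = t := by
      intro t ht0 ht1
      have := Finset.sum_range_sub (fun i => min t ((i : ℝ) / M)) M
      have heq : ∀ i ∈ Finset.range M, gfun M i t
          = min t (((i+1 : ℕ) : ℝ) / M) - min t ((i : ℝ) / M) := by
        intro i _; rw [gfun]; push_cast; ring_nf
      rw [Finset.sum_congr rfl heq, this]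
      have hMM : ((M : ℝ)) / M = 1 := by field_simp
      rw [hMM, min_eq_left ht1]
      simp only [Nat.cast_zero, zero_div]
      rw [min_eq_right ht0]
      ring
    have h1 : ∑ i ∈ Finset.range M, o k i
        = (∑ i ∈ Finset.range M, gfun M i (ℓ (k+1))) - ∑ i ∈ Finset.range M, gfun M i (ℓ k) := by
      rw [← Finset.sum_sub_distrib]
    rw [h1, htel _ (hlnn _) (hl1 _), htel _ (hlnn _) (hl1 _), hlsucc k]
    ring
  have hqsum_k : ∀ k, ∑ b : Fin M, q k b = Q k := by
    intro k
    have : ∀ b : Fin M, q k b = if ψ k = b then Q k else 0 := hqn k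
    simp only [this]
    rw [Finset.sum_ite_eq Finset.univ (ψ k) (fun _ => Q k)]
    simp
  -- the per-k total deviation
  set D : ℕ → ℝ := fun k => ∑ b : Fin M, |o k b.val - q k b| with hDdef
  have hD_nn : ∀ k, 0 ≤ D k := fun k => Finset.sum_nonneg fun b _ => abs_nonneg _
  have hD_le : ∀ k, D k ≤ 2 * Q k := by
    intro k
    have h1 : ∀ b : Fin M, |o k b.val - q k b| ≤ o k b.val + q k b := by
      intro b
      rw [abs_sub_le_iff]
      constructor <;> nlinarith [ho_nn k b.val, hq_nn k b]
    calc D k ≤ ∑ b : Fin M, (o k b.val + q k b) := Finset.sum_le_sum fun b _ => h1 b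
      _ = 2 * Q k := by rw [Finset.sum_add_distrib, hosum_k k, hqsum_k k]; ring
  -- main bound : varDist ≤ ∑' D
  have hD_summable : Summable D :=
    Summable.of_nonneg_of_le hD_nn hD_le ((hQ1.summable).mul_left 2)
  have hmain : varDist (unif M) (pushMap Q ψ) ≤ ∑' k, D k := by
    rw [varDist, tsum_fintype]
    have habs : ∀ b : Fin M, |unif M b - pushMap Q ψ b| ≤ ∑' k, |o k b.val - q k b| := by
      intro b
      have hpush : HasSum (fun k => q k b) (pushMap Q ψ b) := by
        have : pushMap Q ψ b = ∑' k, q k b := rfl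
        rw [this]
        exact (hq_summable b).hasSum
      have hdiff : HasSum (fun k => o k b.val - q k b) (1 / M - pushMap Q ψ b) :=
        (ho_hasSum b.val b.isLt).sub hpush
      have hsummabs : Summable fun k => |o k b.val - q k b| :=
        ((ho_summable b.val b.isLt).sub (hq_summable b)).abs
      have := norm_tsum_le_tsum_norm (f := fun k => o k b.val - q k b) (by
        simpa [Real.norm_eq_abs] using hsummabs)
      rw [hdiff.tsum_eq] at this
      simpa [unif, Real.norm_eq_abs] using this
    have hsw : ∑ b : Fin M, ∑' k, |o k b.val - q k b| = ∑' k, D k := by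
      rw [hDdef, ← Summable.tsum_finsetSum]
      intro b _
      exact ((ho_summable b.val b.isLt).sub (hq_summable b)).abs
    calc ∑ b : Fin M, |unif M b - pushMap Q ψ b|
        ≤ ∑ b : Fin M, ∑' k, |o k b.val - q k b| := Finset.sum_le_sum fun b _ => habs b
      _ = ∑' k, D k := hsw
  -- crossing set
  set C : Set ℕ := {k | 0 < Q k ∧ ((⌊(M : ℝ) * ℓ k⌋₊ : ℝ) + 1) / M < ℓ (k + 1)} with hCdef
  have hD0 : ∀ k ∉ C, D k = 0 := by
    intro k hk
    apply Finset.sum_eq_zero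
    intro b _
    rw [abs_eq_zero, sub_eq_zero]
    by_cases hQk : Q k ≤ 0
    · have hQk0 : Q k = 0 := le_antisymm hQk (hQ0 k)
      have hll : ℓ (k+1) = ℓ k := by rw [hlsucc, hQk0, add_zero]
      rw [hodef, hqn]
      simp [hll, hQk0]
    · push_neg at hQk
      have hkC : ¬ (((⌊(M : ℝ) * ℓ k⌋₊ : ℝ) + 1) / M < ℓ (k + 1)) := by
        intro hcon; exact hk ⟨hQk, hcon⟩
      push_neg at hkC
      set j := ⌊(M : ℝ) * ℓ k⌋₊ with hjdef
      have hlk1 : ℓ k < 1 := by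
        have := hl1 (k+1)
        rw [hlsucc] at this
        linarith
      have hjM : j < M := by
        rw [hjdef, Nat.floor_lt (mul_nonneg hMR.le (hlnn k))]
        calc (M : ℝ) * ℓ k < M * 1 := by gcongr <;> linarith
          _ = M := by ring
      have hψk : ψ k = ⟨j, hjM⟩ := by
        apply Fin.ext
        show min j (M - 1) = j
        exact min_eq_left (by omega)
      have hlow : (j : ℝ) / M ≤ ℓ k := by
        rw [div_le_iff₀ hMR]
        have := Nat.floor_le (mul_nonneg hMR.le (hlnn k))
        rw [← hjdef] at this
        linarith
      have hup : ℓ (k + 1) ≤ ((j : ℝ) + 1) / M := hkC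
      rcases lt_trichotomy (b.val) j with hbj | hbj | hbj
      · -- b < j : both sides zero
        have hq0 : q k b = 0 := by
          rw [hqn]
          have : ψ k ≠ b := by
            rw [hψk]; intro hcon
            exact absurd (congrArg Fin.val hcon).symm (by simp; omega)
          simp [this]
        have hbb : ((b.val : ℝ) + 1) / M ≤ (j : ℝ) / M := by
          gcongr
          have : (b.val : ℕ) + 1 ≤ j := hbj
          exact_mod_cast this
        have hgconst : ∀ t, ℓ k ≤ t → gfun M b.val t
            = ((b.val : ℝ) + 1) / M - (b.val : ℝ) / M := by
          intro t hlt
          have h1 : ((b.val : ℝ) + 1) / M ≤ t := le_trans (hbb.trans hlow) hlt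
          have h2 : (b.val : ℝ) / M ≤ t := le_trans (by gcongr <;> linarith) h1
          rw [gfun, min_eq_right h1, min_eq_right h2]
        rw [hodef, hq0]
        simp only
        rw [hgconst _ (hlmono (Nat.le_succ k)), hgconst _ le_rfl]
        ring
      · -- b = j : both sides Q k
        have hqQ : q k b = Q k := by
          rw [hqn]
          have : ψ k = b := by rw [hψk]; exact Fin.ext hbj.symm
          simp [this]
        have hgid : ∀ t, (j:ℝ)/M ≤ t → t ≤ ((j:ℝ)+1)/M → gfun M b.val t = t - (j:ℝ)/M := by
          intro t h1 h2
          rw [gfun, hbj, min_eq_left h2, min_eq_right h1]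
        rw [hodef, hqQ]
        simp only
        rw [hgid _ hlow (le_trans (hlmono (Nat.le_succ k)) hup),
            hgid _ (le_trans hlow (hlmono (Nat.le_succ k))) hup, hlsucc]
        ring
      · -- b > j : both sides zero
        have hq0 : q k b = 0 := by
          rw [hqn]
          have : ψ k ≠ b := by
            rw [hψk]; intro hcon
            exact absurd (congrArg Fin.val hcon).symm (by simp; omega)
          simp [this]
        have hbb : ((j : ℝ) + 1) / M ≤ (b.val : ℝ) / M := by
          gcongr
          have : j + 1 ≤ (b.val : ℕ) := hbj
          exact_mod_cast this
        have hgzero : ∀ t, t ≤ ℓ (k+1) → gfun M b.val t = 0 := by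
          intro t hlt
          have h2 : t ≤ (b.val : ℝ) / M := le_trans hlt (le_trans hup hbb)
          have h1 : t ≤ ((b.val : ℝ) + 1) / M := le_trans h2 (by gcongr <;> linarith)
          rw [gfun, min_eq_left h1, min_eq_left h2]
          ring
        rw [hodef, hq0]
        simp only
        rw [hgzero _ le_rfl, hgzero _ (hlmono (Nat.le_succ k))]
        ring
  -- C is finite with at most M elements
  set J : ℕ → ℕ := fun k => ⌊(M : ℝ) * ℓ k⌋₊ + 1 with hJdef
  have haux : ∀ k ∈ C, ∀ k' ∈ C, k < k' → J k ≠ J k' := by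
    intro k hk k' hk' hlt he
    have h1 : ((J k : ℝ)) / M < ℓ (k + 1) := by
      have hc : ((J k : ℕ) : ℝ) = (⌊(M:ℝ) * ℓ k⌋₊ : ℝ) + 1 := by
        simp only [hJdef]; push_cast; ring
      rw [hc]; exact hk.2
    have h2 : ℓ (k + 1) ≤ ℓ k' := hlmono hlt
    have h3 : ℓ k' < ((J k' : ℝ)) / M := by
      have hc : ((J k' : ℕ) : ℝ) = (⌊(M:ℝ) * ℓ k'⌋₊ : ℝ) + 1 := by
        simp only [hJdef]; push_cast; ring
      rw [hc, lt_div_iff₀ hMR]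
      have := Nat.lt_floor_add_one ((M : ℝ) * ℓ k')
      linarith [mul_comm (ℓ k') (M:ℝ)]
    rw [he] at h1
    linarith
  have hJinj : Set.InjOn J C := by
    intro k hk k' hk' he
    rcases lt_trichotomy k k' with h | h | h
    · exact absurd he (haux k hk k' hk' h)
    · exact h
    · exact absurd he.symm (haux k' hk' k hk h)
  have hJmem : ∀ k ∈ C, J k ∈ Set.Icc 1 M := by
    intro k hk
    constructor
    · simp only [hJdef]; exact Nat.succ_le_succ (Nat.zero_le _)
    · have hlk1 : ℓ k < 1 := by
        have h1 := hl1 (k+1)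
        rw [hlsucc] at h1
        have := hk.1
        linarith
      have : ⌊(M : ℝ) * ℓ k⌋₊ < M := by
        rw [Nat.floor_lt (mul_nonneg hMR.le (hlnn k))]
        calc (M : ℝ) * ℓ k < M * 1 := by gcongr <;> linarith
          _ = M := by ring
      simp only [hJdef]
      omega
  have hCfin : C.Finite := by
    apply Set.Finite.of_finite_image (f := J) _ hJinj
    exact (Set.finite_Icc 1 M).subset (by rintro _ ⟨k, hk, rfl⟩; exact hJmem k hk)
  have hCcard : C.ncard ≤ M := by
    have h1 : C.ncard = (J '' C).ncard := (Set.ncard_image_of_injOn hJinj).symm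
    have h2 : (J '' C).ncard ≤ (Set.Icc 1 M).ncard :=
      Set.ncard_le_ncard (by rintro _ ⟨k, hk, rfl⟩; exact hJmem k hk) (Set.finite_Icc 1 M)
    have h3 : (Set.Icc 1 M).ncard = M := by
      rw [← Finset.coe_Icc, Set.ncard_coe_finset, Nat.card_Icc]
      omega
    omega
  -- final: control ∑' D
  set F := hCfin.toFinset with hFdef
  have hDleInd : ∀ k, D k ≤ C.indicator (fun k => 2 * Q k) k := by
    intro k
    by_cases hk : k ∈ C
    · rw [Set.indicator_of_mem hk]; exact hD_le k
    · rw [Set.indicator_of_notMem hk, hD0 k hk]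
  have hIndSummable : Summable (C.indicator fun k => 2 * Q k) :=
    ((hQ1.summable).mul_left 2).indicator C
  have hsum1 : ∑' k, D k ≤ ∑' k, C.indicator (fun k => 2 * Q k) k :=
    Summable.tsum_le_tsum hDleInd hD_summable hIndSummable
  have hsum2 : ∑' k, C.indicator (fun k => 2 * Q k) k = ∑ k ∈ F, 2 * Q k := by
    rw [tsum_eq_sum (s := F) (fun k hk => Set.indicator_of_notMem (by
      simpa [hFdef, hCfin.mem_toFinset] using hk) _)]
    exact Finset.sum_congr rfl fun k hk => Set.indicator_of_mem (by
      simpa [hFdef, hCfin.mem_toFinset] using hk) _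
  have hbig : ∑ k ∈ F.filter (fun k => a < Q k), Q k ≤ prb Q {k | a < Q k} := by
    have h1 : ∑ k ∈ F.filter (fun k => a < Q k), Q k
        = ∑ k ∈ F.filter (fun k => a < Q k), Set.indicator {k | a < Q k} Q k := by
      refine Finset.sum_congr rfl fun k hk => ?_
      rw [Set.indicator_of_mem (by simpa using (Finset.mem_filter.mp hk).2)]
    rw [h1, prb]
    exact Summable.sum_le_tsum _ (fun k _ => Set.indicator_nonneg (fun x _ => hQ0 x) k)
      (hQ1.summable.indicator _)
  have hsmall : ∑ k ∈ F.filter (fun k => ¬ a < Q k), Q k ≤ (M : ℝ) * a := by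
    have h1 : ∑ k ∈ F.filter (fun k => ¬ a < Q k), Q k
        ≤ (F.filter (fun k => ¬ a < Q k)).card • a := by
      apply Finset.sum_le_card_nsmul
      intro k hk
      exact le_of_not_gt (Finset.mem_filter.mp hk).2
    have h2 : ((F.filter (fun k => ¬ a < Q k)).card : ℝ) ≤ (M : ℝ) := by
      have hc1 : (F.filter (fun k => ¬ a < Q k)).card ≤ F.card := Finset.card_filter_le _ _
      have hc2 : F.card = C.ncard := by
        rw [hFdef]; exact (Set.ncard_eq_toFinset_card C hCfin).symm
      have : (F.filter (fun k => ¬ a < Q k)).card ≤ M := by omega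
      exact_mod_cast this
    rw [nsmul_eq_mul] at h1
    nlinarith
  calc varDist (unif M) (pushMap Q ψ) ≤ ∑' k, D k := hmain
    _ ≤ ∑ k ∈ F, 2 * Q k := hsum2 ▸ hsum1
    _ = 2 * (∑ k ∈ F.filter (fun k => a < Q k), Q k
          + ∑ k ∈ F.filter (fun k => ¬ a < Q k), Q k) := by
        rw [Finset.sum_filter_add_sum_filter_not, Finset.mul_sum]
    _ ≤ 2 * prb Q {k | a < Q k} + 2 * M * a := by nlinarith

lemma converse_bound {α : Type*} {M : ℕ} (hM : 0 < M) (P : α → ℝ) (hP0 : ∀ a, 0 ≤ P a)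
    (hP1 : HasSum P 1) (φ : α → Fin M) {c : ℝ} (hc : 0 < c) :
    prb P {y | c ≤ P y} ≤ varDist (unif M) (pushMap P φ) / 2 + 1 / (c * M) := by
  classical
  have hMR : (0 : ℝ) < M := by exact_mod_cast hM
  -- finiteness of the heavy set
  have hev : ∀ᶠ y in Filter.cofinite, P y < c :=
    hP1.summable.tendsto_cofinite_zero.eventually (gt_mem_nhds hc)
  have hfin : {y | c ≤ P y}.Finite := by
    have := Filter.eventually_cofinite.mp hev
    convert this using 1
    ext y; simp [not_lt]
  set t : Finset α := hfin.toFinset with ht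
  have hmemt : ∀ y, y ∈ t ↔ c ≤ P y := by intro y; simp [ht, hfin.mem_toFinset]
  -- prb = finite sum
  have hprb : prb P {y | c ≤ P y} = ∑ y ∈ t, P y := by
    rw [prb, tsum_eq_sum (s := t) (fun y hy => Set.indicator_of_notMem (by
      simpa [hmemt] using hy) P)]
    exact Finset.sum_congr rfl fun y hy => Set.indicator_of_mem (by simpa [hmemt] using hy) P
  -- cardinality bound
  have hcard : (t.card : ℝ) * c ≤ 1 := by
    have h1 : (t.card : ℝ) * c = t.card • c := by simp [nsmul_eq_mul]
    have h2 : t.card • c ≤ ∑ y ∈ t, P y :=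
      Finset.card_nsmul_le_sum t P c (fun y hy => (hmemt y).mp hy)
    have h3 : ∑ y ∈ t, P y ≤ 1 := sum_le_hasSum t (fun y _ => hP0 y) hP1
    linarith [h1 ▸ h2]
  set A : Finset (Fin M) := t.image φ with hA
  set S : Fin M → ℝ := pushMap P φ with hS
  have hShasSum : HasSum S 1 := hasSum_pushMap hP1 φ
  have hS0 : ∀ b, 0 ≤ S b := fun b =>
    tsum_nonneg fun a => Set.indicator_nonneg (fun x _ => hP0 x) a
  -- mass captured by A
  have hsumA : ∑ y ∈ t, P y ≤ ∑ b ∈ A, S b := by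
    have h1 : ∑ b ∈ A, S b = ∑' y, Set.indicator {y | φ y ∈ A} P y := by
      rw [hS]
      have h2 : ∑ b ∈ A, pushMap P φ b
          = ∑' y, ∑ b ∈ A, Set.indicator {y' | φ y' = b} P y :=
        (Summable.tsum_finsetSum (fun b _ => hP1.summable.indicator _)).symm
      rw [h2]
      congr 1; ext y
      have : ∀ b : Fin M, Set.indicator {y' | φ y' = b} P y = if φ y = b then P y else 0 := by
        intro b; simp [Set.indicator_apply]
      simp only [this]
      rw [Finset.sum_ite_eq A (φ y) (fun _ => P y)]
      simp [Set.indicator_apply]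
    rw [h1]
    have h3 : ∑ y ∈ t, P y = ∑ y ∈ t, Set.indicator {y | φ y ∈ A} P y := by
      refine Finset.sum_congr rfl fun y hy => ?_
      rw [Set.indicator_of_mem]
      exact Set.mem_setOf.mpr (Finset.mem_image_of_mem φ hy)
    rw [h3]
    exact Summable.sum_le_tsum t (fun y _ => Set.indicator_nonneg (fun x _ => hP0 x) y)
      (hP1.summable.indicator _)
  -- card A bound
  have hAcard : (A.card : ℝ) ≤ 1 / c := by
    have h1 : (A.card : ℝ) ≤ t.card := by exact_mod_cast Finset.card_image_le
    have h2 : (t.card : ℝ) ≤ 1 / c := by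
      rw [le_div_iff₀ hc]; linarith
    linarith
  -- variational distance lower bound
  have hV : 2 * ∑ b ∈ A, (S b - 1 / M) ≤ varDist (unif M) S := by
    have htot : ∑ b : Fin M, (S b - 1 / M) = 0 := by
      have h1 : ∑ b : Fin M, S b = 1 := by
        have := (tsum_fintype (L := SummationFilter.unconditional _) S).symm
        rw [this, hShasSum.tsum_eq]
      rw [Finset.sum_sub_distrib, h1]
      simp [Finset.card_univ]
      field_simp
      ring
    have hsplit : ∑ b ∈ A, (S b - 1/M) + ∑ b ∈ Aᶜ, (S b - 1/M) = 0 := by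
      rw [Finset.sum_add_sum_compl]; exact htot
    have h1 : ∑ b ∈ A, (S b - 1/M) ≤ ∑ b ∈ A, |unif M b - S b| := by
      refine Finset.sum_le_sum fun b _ => ?_
      rw [abs_sub_comm]
      exact le_abs_self _ |>.trans_eq (by rw [unif])
    have h2 : ∑ b ∈ A, (S b - 1/M) = ∑ b ∈ Aᶜ, (1/M - S b) := by
      have : ∑ b ∈ Aᶜ, (1/(M:ℝ) - S b) = - ∑ b ∈ Aᶜ, (S b - 1/M) := by
        rw [← Finset.sum_neg_distrib]; congr 1; ext b; ring
      rw [this]; linarith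
    have h3 : ∑ b ∈ Aᶜ, (1/(M:ℝ) - S b) ≤ ∑ b ∈ Aᶜ, |unif M b - S b| := by
      refine Finset.sum_le_sum fun b _ => ?_
      exact le_abs_self _ |>.trans_eq (by rw [unif])
    have h4 : varDist (unif M) S = ∑ b ∈ A, |unif M b - S b| + ∑ b ∈ Aᶜ, |unif M b - S b| := by
      rw [varDist, tsum_fintype, Finset.sum_add_sum_compl]
    linarith
  -- combine
  have hfinal : 2 * (prb P {y | c ≤ P y} - 1 / (c * M)) ≤ varDist (unif M) S := by
    have h1 : ∑ b ∈ A, (S b - 1/M) = ∑ b ∈ A, S b - A.card / M := by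
      rw [Finset.sum_sub_distrib, Finset.sum_const, nsmul_eq_mul]; ring
    have h2 : (A.card : ℝ) / M ≤ (1/c) / M := by
      gcongr
    have h3 : (1/c) / (M:ℝ) = 1 / (c * M) := by field_simp
    have : prb P {y | c ≤ P y} - 1/(c*M) ≤ ∑ b ∈ A, (S b - 1/M) := by
      rw [h1, hprb]
      have := hsumA
      linarith [h3 ▸ h2]
    linarith
  linarith

lemma exists_push {α : Type*} [Countable α] {M : ℕ} (hM : 0 < M) (P : α → ℝ)
    (hP0 : ∀ y, 0 ≤ P y) (hP1 : HasSum P 1) {a : ℝ} (ha : 0 < a) :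
    ∃ φ : α → Fin M, varDist (unif M) (pushMap P φ)
      ≤ 2 * prb P {y | a < P y} + 2 * M * a := by
  classical
  obtain ⟨e, he⟩ := exists_injective_nat α
  set Q : ℕ → ℝ := Function.extend e P (fun _ => (0:ℝ)) with hQdef
  have hQe : ∀ y, Q (e y) = P y := fun y => he.extend_apply P (fun _ => (0:ℝ)) y
  have hQoff : ∀ k, (¬ ∃ y, e y = k) → Q k = 0 := fun k hk => by
    rw [hQdef, Function.extend_apply' P (fun _ => (0:ℝ)) k hk]
  have hQ0 : ∀ k, 0 ≤ Q k := by
    intro k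
    by_cases hk : ∃ y, e y = k
    · obtain ⟨y, rfl⟩ := hk; rw [hQe]; exact hP0 y
    · rw [hQoff k hk]
  have hQ1 : HasSum Q 1 := by
    refine (he.hasSum_iff ?_).mp ?_
    · intro k hk
      exact hQoff k (by simpa [Set.range] using hk)
    · have : Q ∘ e = P := funext hQe
      rw [this]; exact hP1
  have hb := direct_bound hM Q hQ0 hQ1 ha
  refine ⟨fun y => psiFun M hM Q (e y), ?_⟩
  have hsupp : ∀ (s : Set ℕ), Function.support (s.indicator Q) ⊆ Set.range e := by
    intro s k hk
    by_contra hkr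
    have : Q k = 0 := hQoff k (by simpa [Set.range] using hkr)
    apply hk
    simp [Set.indicator_apply, this]
  have hpush : pushMap P (fun y => psiFun M hM Q (e y)) = pushMap Q (psiFun M hM Q) := by
    funext b
    rw [pushMap, pushMap]
    rw [← he.tsum_eq (f := fun k => Set.indicator {k' | psiFun M hM Q k' = b} Q k)
      (hsupp _)]
    congr 1; funext y
    by_cases hy : psiFun M hM Q (e y) = b
    · rw [Set.indicator_of_mem (by exact hy), Set.indicator_of_mem (by exact hy), hQe]
    · rw [Set.indicator_of_notMem (by exact hy), Set.indicator_of_notMem (by exact hy)]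
  have hprb : prb Q {k | a < Q k} = prb P {y | a < P y} := by
    rw [prb, prb]
    rw [← he.tsum_eq (f := fun k => Set.indicator {k' | a < Q k'} Q k) (hsupp _)]
    congr 1; funext y
    by_cases hy : a < P y
    · rw [Set.indicator_of_mem
          (show e y ∈ {k' | a < Q k'} by simp only [Set.mem_setOf_eq, hQe]; exact hy),
        Set.indicator_of_mem (show y ∈ {y | a < P y} from hy), hQe]
    · rw [Set.indicator_of_notMem
          (show e y ∉ {k' | a < Q k'} by simp only [Set.mem_setOf_eq, hQe]; exact hy),
        Set.indicator_of_notMem (show y ∉ {y | a < P y} from hy)]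
  rw [hpush, ← hprb]
  exact hb

lemma hasSum_unif {M : ℕ} (hM : 0 < M) : HasSum (unif M) 1 := by
  have h := hasSum_fintype (unif M)
  have : ∑ b : Fin M, unif M b = 1 := by
    simp [unif, Finset.sum_const, Finset.card_univ]
    field_simp
  rwa [this] at h

lemma unif_nonneg (M : ℕ) : ∀ b, 0 ≤ unif M b := fun b => by
  rw [unif]; positivity

lemma sSup_eq_of_approx {S T : Set ℝ} (hS : S.Nonempty) (hT : T.Nonempty)
    (hST : ∀ R ∈ S, ∀ ε > 0, R - ε ∈ T) (hTS : ∀ R ∈ T, ∀ ε > 0, R - ε ∈ S) :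
    sSup S = sSup T := by
  by_cases hb : BddAbove T
  · have hbS : BddAbove S := by
      obtain ⟨c, hc⟩ := hb
      refine ⟨c + 1, fun R hR => ?_⟩
      have := hc (hST R hR 1 one_pos)
      linarith
    apply le_antisymm
    · apply csSup_le hS
      intro R hR
      refine le_of_forall_pos_le_add fun ε hε => ?_
      have := le_csSup hb (hST R hR ε hε)
      linarith
    · apply csSup_le hT
      intro R hR
      refine le_of_forall_pos_le_add fun ε hε => ?_
      have := le_csSup hbS (hTS R hR ε hε)
      linarith
  · have hbS : ¬ BddAbove S := by
      rintro ⟨c, hc⟩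
      apply hb
      refine ⟨c + 1, fun R hR => ?_⟩
      have := hc (hTS R hR 1 one_pos)
      linarith
    rw [Real.sSup_of_not_bddAbove hb, Real.sSup_of_not_bddAbove hbS]
/-- First-order intrinsic randomness theorem (Han): for every general source
`Y = {Yⁿ}` and every `0 ≤ δ < 2`, the δ-intrinsic randomness `S_ι(δ|Y)` equals
`sup { R | G(R) ≤ δ/2 }` where `G(R) = limsup_n Pr{ (1/n) log(1/P_{Yⁿ}(Yⁿ)) ≤ R }`. -/
theorem first_order_intrinsic_randomness
    (𝒴 : ℕ → Type*) [∀ n, Countable (𝒴 n)]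
    (P : ∀ n, 𝒴 n → ℝ) (hP : ∀ n, IsPMF (P n))
    (δ : ℝ) (hδ0 : 0 ≤ δ) (hδ2 : δ < 2) :
    sSup {R : ℝ | ∃ M : ℕ → ℕ, (∀ n, 0 < M n) ∧ ∃ φ : ∀ n, 𝒴 n → Fin (M n),
        R ≤ Filter.liminf (fun n : ℕ => (1 / (n : ℝ)) * Real.log (M n)) Filter.atTop ∧
        Filter.limsup (fun n : ℕ =>
          varDist (unif (M n)) (pushMap (P n) (φ n))) Filter.atTop ≤ δ}
      =
    sSup {R : ℝ | Filter.limsup (fun n : ℕ =>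
        prb (P n) {y | (1 / (n : ℝ)) * Real.log (1 / P n y) ≤ R}) Filter.atTop ≤ δ / 2} := by
  classical
  have hPMF0 : ∀ n y, 0 ≤ P n y := fun n => (hP n).1
  have hPMF1 : ∀ n, HasSum (P n) 1 := fun n => (hP n).2
  -- trivial witness for the left set
  have htrivial : ∀ R' : ℝ, R' ≤ 0 → ∃ M : ℕ → ℕ, (∀ n, 0 < M n) ∧
      ∃ φ : ∀ n, 𝒴 n → Fin (M n),
      R' ≤ Filter.liminf (fun n : ℕ => (1 / (n : ℝ)) * Real.log (M n)) Filter.atTop ∧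
      Filter.limsup (fun n : ℕ =>
        varDist (unif (M n)) (pushMap (P n) (φ n))) Filter.atTop ≤ δ := by
    intro R' hR'
    refine ⟨fun _ => 1, fun _ => one_pos, fun n _ => 0, ?_, ?_⟩
    · have h1 : (fun n : ℕ => (1 / (n : ℝ)) * Real.log ((1 : ℕ) : ℝ)) = fun _ : ℕ => (0:ℝ) := by
        funext n; simp
      rw [h1, Filter.liminf_const]
      exact hR'
    · have h2 : ∀ n : ℕ, varDist (unif 1) (pushMap (P n) (fun _ => (0 : Fin 1))) = 0 := by
        intro n
        rw [varDist_fin]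
        have := pushMap_one (M := 1) (hPMF1 n)
        simp [unif, this]
      simp only [h2, Filter.limsup_const]
      exact hδ0
  apply sSup_eq_of_approx
  -- S₁ nonempty
  · exact ⟨0, htrivial 0 le_rfl⟩
  -- S₂ nonempty
  · refine ⟨-1, ?_⟩
    have hempty : ∀ n : ℕ,
        {y : 𝒴 n | (1 / (n : ℝ)) * Real.log (1 / P n y) ≤ (-1:ℝ)} = ∅ := by
      intro n
      ext y
      simp only [Set.mem_setOf_eq, Set.mem_empty_iff_false, iff_false, not_le]
      have hnn : 0 ≤ (1 / (n : ℝ)) * Real.log (1 / P n y) := by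
        apply mul_nonneg (by positivity)
        by_cases hPy : P n y ≤ 0
        · have : P n y = 0 := le_antisymm hPy (hPMF0 n y)
          simp [this]
        · push_neg at hPy
          apply Real.log_nonneg
          rw [le_div_iff₀ hPy, one_mul]
          exact le_hasSum (hPMF1 n) y (fun j _ => hPMF0 n j)
      linarith
    simp only [Set.mem_setOf_eq, hempty, prb_empty, Filter.limsup_const]
    linarith
  -- converse : S₁ member minus ε is in S₂
  · rintro R ⟨M, hMpos, φ, hlim, hvar⟩ ε hε
    simp only [Set.mem_setOf_eq]
    set c : ℕ → ℝ := fun n => Real.exp (-((n:ℝ) * (R - ε))) with hcdef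
    have hc : ∀ n, 0 < c n := fun n => Real.exp_pos _
    -- step A : set comparison
    have hsetle : ∀ n : ℕ, 1 ≤ n →
        prb (P n) {y | (1 / (n : ℝ)) * Real.log (1 / P n y) ≤ R - ε}
          ≤ prb (P n) {y | c n ≤ P n y} := by
      intro n hn
      have hnR : (0:ℝ) < n := by exact_mod_cast hn
      apply Summable.tsum_le_tsum _ ((hPMF1 n).summable.indicator _) ((hPMF1 n).summable.indicator _)
      intro y
      by_cases hy : y ∈ {y : 𝒴 n | (1 / (n : ℝ)) * Real.log (1 / P n y) ≤ R - ε}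
      · rw [Set.indicator_of_mem hy]
        by_cases hPy : P n y ≤ 0
        · have h0 : P n y = 0 := le_antisymm hPy (hPMF0 n y)
          rw [h0]
          exact Set.indicator_nonneg (fun x _ => hPMF0 n x) y
        · push_neg at hPy
          have hmem : y ∈ {y : 𝒴 n | c n ≤ P n y} := by
            have h1 : Real.log (1 / P n y) ≤ (n:ℝ) * (R - ε) := by
              have hy' : (1 / (n : ℝ)) * Real.log (1 / P n y) ≤ R - ε := hy
              calc Real.log (1 / P n y)
                  = (n:ℝ) * ((1 / (n:ℝ)) * Real.log (1 / P n y)) := by field_simp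
                _ ≤ (n:ℝ) * (R - ε) := mul_le_mul_of_nonneg_left hy' hnR.le
            have h2 : 1 / P n y ≤ Real.exp ((n:ℝ) * (R - ε)) :=
              (Real.log_le_iff_le_exp (by positivity)).mp h1
            have hE : 0 < Real.exp ((n:ℝ) * (R - ε)) := Real.exp_pos _
            show c n ≤ P n y
            rw [hcdef]
            simp only
            rw [Real.exp_neg, inv_eq_one_div, div_le_iff₀ hE]
            rw [div_le_iff₀ hPy] at h2
            nlinarith
          rw [Set.indicator_of_mem hmem]
      · rw [Set.indicator_of_notMem hy]
        exact Set.indicator_nonneg (fun x _ => hPMF0 n x) y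
    -- step B : converse bound per n
    have hbound : ∀ n : ℕ, prb (P n) {y | c n ≤ P n y}
        ≤ varDist (unif (M n)) (pushMap (P n) (φ n)) / 2 + 1 / (c n * M n) :=
      fun n => converse_bound (hMpos n) (P n) (hPMF0 n) (hPMF1 n) (φ n) (hc n)
    -- step C : eventual smallness of 1/(c n * M n)
    have hflb : ∀ n : ℕ, (0:ℝ) ≤ (1 / (n : ℝ)) * Real.log (M n) := by
      intro n
      apply mul_nonneg (by positivity)
      apply Real.log_nonneg
      exact_mod_cast Nat.one_le_iff_ne_zero.mpr (hMpos n).ne'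
    have hbd1 : Filter.IsBoundedUnder (· ≥ ·) Filter.atTop
        (fun n : ℕ => (1 / (n : ℝ)) * Real.log (M n)) := by
      exact ⟨0, Filter.eventually_map.mpr (Filter.Eventually.of_forall hflb)⟩
    have hev1 : ∀ᶠ n : ℕ in Filter.atTop, R - ε / 2 < (1 / (n : ℝ)) * Real.log (M n) :=
      Filter.eventually_lt_of_lt_liminf (lt_of_lt_of_le (by linarith) hlim) hbd1
    have hev2 : ∀ᶠ n : ℕ in Filter.atTop,
        1 / (c n * M n) ≤ Real.exp (-((n:ℝ) * (ε / 2))) := by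
      filter_upwards [hev1, Filter.eventually_ge_atTop 1] with n hn hn1
      have hnR : (0:ℝ) < n := by exact_mod_cast hn1
      have hMn : Real.exp ((n:ℝ) * (R - ε / 2)) < (M n : ℝ) := by
        rw [← Real.lt_log_iff_exp_lt (by exact_mod_cast hMpos n)]
        calc (n:ℝ) * (R - ε/2) < (n:ℝ) * ((1/(n:ℝ)) * Real.log (M n)) := by
              apply mul_lt_mul_of_pos_left hn hnR
          _ = Real.log (M n) := by field_simp
      have hcM : 1 / (c n * M n) = Real.exp ((n:ℝ) * (R - ε)) / (M n : ℝ) := by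
        rw [hcdef]
        simp only
        rw [Real.exp_neg]
        field_simp
      rw [hcM]
      have hstep : Real.exp ((n:ℝ)*(R-ε)) / (M n : ℝ)
          ≤ Real.exp ((n:ℝ)*(R-ε)) / Real.exp ((n:ℝ)*(R-ε/2)) := by
        apply div_le_div_of_nonneg_left (Real.exp_pos _).le (Real.exp_pos _) hMn.le
      calc Real.exp ((n:ℝ)*(R-ε)) / (M n : ℝ)
          ≤ Real.exp ((n:ℝ)*(R-ε)) / Real.exp ((n:ℝ)*(R-ε/2)) := hstep
        _ = Real.exp ((n:ℝ)*(R-ε) - (n:ℝ)*(R-ε/2)) := (Real.exp_sub _ _).symm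
        _ = Real.exp (-((n:ℝ) * (ε/2))) := by ring_nf
    -- step D : limsup assembly
    refine le_of_forall_pos_le_add fun η hη => ?_
    have hvarbd : ∀ n, varDist (unif (M n)) (pushMap (P n) (φ n)) ≤ 2 := fun n =>
      varDist_le_two (unif_nonneg (M n)) (hasSum_unif (hMpos n))
        (fun b => tsum_nonneg fun y => Set.indicator_nonneg (fun x _ => hPMF0 n x) y)
        (hasSum_pushMap (hPMF1 n) (φ n))
    have hbd3 : Filter.IsBoundedUnder (· ≤ ·) Filter.atTop
        (fun n : ℕ => varDist (unif (M n)) (pushMap (P n) (φ n))) := by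
      exact ⟨2, Filter.eventually_map.mpr (Filter.Eventually.of_forall hvarbd)⟩
    have hev3 : ∀ᶠ n : ℕ in Filter.atTop,
        varDist (unif (M n)) (pushMap (P n) (φ n)) < δ + η :=
      Filter.eventually_lt_of_limsup_lt (lt_of_le_of_lt hvar (by linarith)) hbd3
    have hev4 : ∀ᶠ n : ℕ in Filter.atTop, Real.exp (-((n:ℝ) * (ε / 2))) ≤ η / 2 :=
      (tendsto_exp_neg_mul (half_pos hε)).eventually_le_const (by linarith)
    have hcb : Filter.IsBoundedUnder (· ≥ ·) Filter.atTop (fun n : ℕ =>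
        prb (P n) {y | (1 / (n : ℝ)) * Real.log (1 / P n y) ≤ R - ε}) := by
      exact ⟨0, Filter.eventually_map.mpr
        (Filter.Eventually.of_forall (fun n => prb_nonneg (P n) (hPMF0 n) _))⟩
    apply Filter.limsup_le_of_le hcb.isCoboundedUnder_le
    · filter_upwards [hev2, hev3, hev4, Filter.eventually_ge_atTop 1] with n h2 h3 h4 hn1
      calc prb (P n) {y | (1 / (n : ℝ)) * Real.log (1 / P n y) ≤ R - ε}
          ≤ prb (P n) {y | c n ≤ P n y} := hsetle n hn1
        _ ≤ varDist (unif (M n)) (pushMap (P n) (φ n)) / 2 + 1 / (c n * M n) := hbound n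
        _ ≤ (δ + η) / 2 + η / 2 := by
            have := h2.trans h4
            linarith
        _ ≤ δ / 2 + η := by linarith
  -- direct : S₂ member minus ε is in S₁
  · rintro R hR ε hε
    simp only [Set.mem_setOf_eq] at hR ⊢
    by_cases hcase : R - ε ≤ 0
    · exact htrivial (R - ε) hcase
    push_neg at hcase
    set M : ℕ → ℕ := fun n => ⌈Real.exp ((n:ℝ) * (R - ε))⌉₊ with hMdef
    have hMpos : ∀ n, 0 < M n := fun n => Nat.ceil_pos.mpr (Real.exp_pos _)
    set aseq : ℕ → ℝ := fun n => Real.exp (-((n:ℝ) * (R - ε / 2))) with hadef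
    have haseq : ∀ n, 0 < aseq n := fun n => Real.exp_pos _
    have hex : ∀ n, ∃ φn : 𝒴 n → Fin (M n), varDist (unif (M n)) (pushMap (P n) φn)
        ≤ 2 * prb (P n) {y | aseq n < P n y} + 2 * (M n) * aseq n := fun n =>
      exists_push (hMpos n) (P n) (hPMF0 n) (hPMF1 n) (haseq n)
    choose φ hφ using hex
    refine ⟨M, hMpos, φ, ?_, ?_⟩
    -- liminf goal
    · have hev : ∀ᶠ n : ℕ in Filter.atTop, R - ε ≤ (1 / (n : ℝ)) * Real.log (M n) := by
        filter_upwards [Filter.eventually_ge_atTop 1] with n hn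
        have hnR : (0:ℝ) < n := by exact_mod_cast hn
        have h1 : Real.exp ((n:ℝ) * (R - ε)) ≤ (M n : ℝ) := Nat.le_ceil _
        have h2 : (n:ℝ) * (R - ε) ≤ Real.log (M n) := by
          rw [← Real.log_exp ((n:ℝ) * (R - ε))]
          exact Real.log_le_log (Real.exp_pos _) h1
        calc R - ε = (1 / (n:ℝ)) * ((n:ℝ) * (R - ε)) := by field_simp
          _ ≤ (1 / (n:ℝ)) * Real.log (M n) :=
              mul_le_mul_of_nonneg_left h2 (by positivity)
      have hub : ∀ᶠ n : ℕ in Filter.atTop,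
          (1 / (n : ℝ)) * Real.log (M n) ≤ (R - ε) + Real.log 2 := by
        filter_upwards [Filter.eventually_ge_atTop 1] with n hn
        have hnR : (0:ℝ) < n := by exact_mod_cast hn
        have h1 : (M n : ℝ) ≤ 2 * Real.exp ((n:ℝ) * (R - ε)) := by
          have h2 : (M n : ℝ) < Real.exp ((n:ℝ)*(R-ε)) + 1 :=
            Nat.ceil_lt_add_one (Real.exp_pos _).le
          have h3 : (1:ℝ) ≤ Real.exp ((n:ℝ)*(R-ε)) :=
            Real.one_le_exp (by nlinarith)
          linarith
        have h4 : Real.log (M n) ≤ Real.log 2 + (n:ℝ)*(R-ε) := by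
          calc Real.log (M n) ≤ Real.log (2 * Real.exp ((n:ℝ)*(R-ε))) :=
                Real.log_le_log (by exact_mod_cast hMpos n) h1
            _ = Real.log 2 + (n:ℝ)*(R-ε) := by
                rw [Real.log_mul two_ne_zero (Real.exp_pos _).ne', Real.log_exp]
        have h5 : (1/(n:ℝ)) * Real.log (M n) ≤ (1/(n:ℝ)) * (Real.log 2 + (n:ℝ)*(R-ε)) :=
          mul_le_mul_of_nonneg_left h4 (by positivity)
        have h6 : (1/(n:ℝ)) * (Real.log 2 + (n:ℝ)*(R-ε)) = Real.log 2 * (1/(n:ℝ)) + (R-ε) := by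
          field_simp
        have h7 : Real.log 2 * (1/(n:ℝ)) ≤ Real.log 2 * 1 := by
          apply mul_le_mul_of_nonneg_left _ (Real.log_nonneg one_le_two)
          rw [div_le_one hnR]
          exact_mod_cast hn
        calc (1/(n:ℝ)) * Real.log (M n) ≤ Real.log 2 * (1/(n:ℝ)) + (R-ε) := h6 ▸ h5
          _ ≤ (R - ε) + Real.log 2 := by linarith
      have hbd2 : Filter.IsBoundedUnder (· ≤ ·) Filter.atTop
          (fun n : ℕ => (1 / (n : ℝ)) * Real.log (M n)) := by
        exact ⟨(R - ε) + Real.log 2, Filter.eventually_map.mpr hub⟩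
      exact Filter.le_liminf_of_le hbd2.isCoboundedUnder_ge hev
    -- limsup goal
    · refine le_of_forall_pos_le_add fun η hη => ?_
      have hz : Filter.Tendsto (fun n : ℕ => 2 * (M n : ℝ) * aseq n)
          Filter.atTop (nhds 0) := by
        have hg : Filter.Tendsto (fun n : ℕ => 2 * Real.exp (-((n:ℝ) * (ε/2)))
            + 2 * Real.exp (-((n:ℝ) * (R - ε/2)))) Filter.atTop (nhds 0) := by
          have hA := (tendsto_exp_neg_mul (half_pos hε)).const_mul 2
          have hB := (tendsto_exp_neg_mul (by linarith : (0:ℝ) < R - ε/2)).const_mul 2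
          have := hA.add hB
          simpa using this
        apply squeeze_zero (fun n => by positivity) _ hg
        intro n
        have h1 : (M n : ℝ) ≤ Real.exp ((n:ℝ)*(R-ε)) + 1 :=
          (Nat.ceil_lt_add_one (Real.exp_pos _).le).le
        have h2 : 2 * (M n : ℝ) * aseq n
            ≤ 2 * (Real.exp ((n:ℝ)*(R-ε)) + 1) * aseq n := by
          apply mul_le_mul_of_nonneg_right _ (haseq n).le
          linarith
        have h3 : Real.exp ((n:ℝ)*(R-ε)) * aseq n = Real.exp (-((n:ℝ) * (ε/2))) := by
          rw [hadef]
          simp only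
          rw [← Real.exp_add]
          ring_nf
        calc 2 * (M n : ℝ) * aseq n ≤ 2 * (Real.exp ((n:ℝ)*(R-ε)) + 1) * aseq n := h2
          _ = 2 * (Real.exp ((n:ℝ)*(R-ε)) * aseq n) + 2 * aseq n := by ring
          _ = 2 * Real.exp (-((n:ℝ) * (ε/2))) + 2 * Real.exp (-((n:ℝ) * (R - ε/2))) := by
              rw [h3, hadef]
      have hev5 : ∀ᶠ n : ℕ in Filter.atTop, 2 * (M n : ℝ) * aseq n ≤ η / 2 :=
        hz.eventually_le_const (by linarith)
      have hev6 : ∀ᶠ n : ℕ in Filter.atTop,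
          prb (P n) {y | (1 / (n : ℝ)) * Real.log (1 / P n y) ≤ R} < δ/2 + η/4 :=
        Filter.eventually_lt_of_limsup_lt (lt_of_le_of_lt hR (by linarith))
          ⟨1, Filter.eventually_map.mpr
            (Filter.Eventually.of_forall (fun n => prb_le_one (hPMF0 n) (hPMF1 n) _))⟩
      have hincl : ∀ n : ℕ, 1 ≤ n → prb (P n) {y | aseq n < P n y}
          ≤ prb (P n) {y | (1 / (n : ℝ)) * Real.log (1 / P n y) ≤ R} := by
        intro n hn
        apply prb_mono (hPMF0 n) (hPMF1 n).summable
        intro y hy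
        have hnR : (0:ℝ) < n := by exact_mod_cast hn
        have hay : aseq n < P n y := hy
        have hPy : 0 < P n y := lt_trans (haseq n) hay
        have h1 : 1 / P n y < Real.exp ((n:ℝ) * (R - ε/2)) := by
          rw [div_lt_iff₀ hPy]
          have h2 : Real.exp ((n:ℝ)*(R-ε/2)) * aseq n
              < Real.exp ((n:ℝ)*(R-ε/2)) * P n y :=
            mul_lt_mul_of_pos_left hay (Real.exp_pos _)
          have h3 : Real.exp ((n:ℝ)*(R-ε/2)) * aseq n = 1 := by
            rw [hadef]
            simp only
            rw [← Real.exp_add]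
            simp
          linarith [h2, h3]
        have h4 : Real.log (1 / P n y) < (n:ℝ) * (R - ε/2) := by
          have := Real.log_lt_log (by positivity) h1
          rwa [Real.log_exp] at this
        show (1 / (n : ℝ)) * Real.log (1 / P n y) ≤ R
        calc (1 / (n:ℝ)) * Real.log (1 / P n y)
            ≤ (1 / (n:ℝ)) * ((n:ℝ) * (R - ε/2)) :=
              mul_le_mul_of_nonneg_left h4.le (by positivity)
          _ = R - ε/2 := by field_simp
          _ ≤ R := by linarith
      have hcb2 : Filter.IsBoundedUnder (· ≥ ·) Filter.atTop (fun n : ℕ =>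
          varDist (unif (M n)) (pushMap (P n) (φ n))) := by
        exact ⟨0, Filter.eventually_map.mpr (Filter.Eventually.of_forall
          (fun n => varDist_nonneg (unif (M n)) (pushMap (P n) (φ n))))⟩
      apply Filter.limsup_le_of_le hcb2.isCoboundedUnder_le
      · filter_upwards [hev5, hev6, Filter.eventually_ge_atTop 1] with n h5 h6 hn1
        calc varDist (unif (M n)) (pushMap (P n) (φ n))
            ≤ 2 * prb (P n) {y | aseq n < P n y} + 2 * (M n) * aseq n := hφ n
          _ ≤ 2 * (δ/2 + η/4) + η/2 := by
              have := (hincl n hn1).trans h6.le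
              linarith
          _ = δ + η := by ring
end
end

section
/- Let Y = {Yⁿ} be the mixed source of two i.i.d. sources Y₁, Y₂ on a countable alphabet 𝒴 with weights w(1), w(2). Let {z_n} be any sequence of real numbers and let {γ_n} be a sequence with γ₁ > γ₂ > ⋯ > 0, γ_n → 0, and √n·γ_n → ∞. Then for i = 1, 2 and every n ≥ 1, Pr{ (1/√n) log(1/P_{Yⁿ}(Yᵢⁿ)) ≥ z_n } ≥ Pr{ (1/√n) log(1/P_{Yᵢⁿ}(Yᵢⁿ)) ≥ z_n + γ_n } − e^{−√n·γ_n}, where Yᵢⁿ is distributed according to the n-fold i.i.d. extension P_{Yᵢⁿ} of Yᵢ. -/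
open Filter MeasureTheory
open scoped BigOperators

noncomputable section

def prodP {α : Type*} (P : α → ℝ) (n : ℕ) : (Fin n → α) → ℝ := fun y => ∏ j, P (y j)

def mix2 {α : Type*} (P1 P2 : α → ℝ) (w1 w2 : ℝ) (n : ℕ) : (Fin n → α) → ℝ :=
  fun y => w1 * prodP P1 n y + w2 * prodP P2 n y

lemma prodP_nonneg {α : Type*} {P : α → ℝ} (h0 : ∀ a, 0 ≤ P a) (n : ℕ) (y : Fin n → α) :
    0 ≤ prodP P n y :=
  Finset.prod_nonneg fun j _ => h0 (y j)

lemma hasSum_prodP {α : Type*} {P : α → ℝ} (h0 : ∀ a, 0 ≤ P a) (h1 : HasSum P 1) (n : ℕ) :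
    HasSum (prodP P n) 1 := by
  induction n with
  | zero =>
      have hconst : prodP P 0 = fun _ : Fin 0 → α => (1 : ℝ) := by
        funext y; simp [prodP]
      rw [hconst]
      have := hasSum_single (f := fun _ : Fin 0 → α => (1 : ℝ)) default
        (fun b hb => (hb (Subsingleton.elim b default)).elim)
      simpa using this
  | succ m ih =>
      have hsum : Summable fun p : α × (Fin m → α) => P p.1 * prodP P m p.2 :=
        Summable.mul_of_nonneg h1.summable ih.summable h0 (prodP_nonneg h0 m)
      have key : HasSum (fun p : α × (Fin m → α) => P p.1 * prodP P m p.2) 1 := by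
        simpa using h1.mul ih hsum
      have heq : prodP P (m + 1)
          = (fun p : α × (Fin m → α) => P p.1 * prodP P m p.2) ∘ (Fin.consEquiv (fun _ : Fin (m + 1) => α)).symm := by
        funext y
        simp [prodP, Fin.prod_univ_succ, Fin.consEquiv, Fin.tail]
      rw [heq]
      exact ((Fin.consEquiv (fun _ : Fin (m + 1) => α)).symm.hasSum_iff).mpr key

/-- Key lemma for mixed sources (Han), first inequality: for a mixed source
`Yⁿ = w(1) Y₁ⁿ + w(2) Y₂ⁿ` of two i.i.d. sources, any real sequence `z_n` and any
sequence `γ_n` with `γ₁ > γ₂ > ⋯ > 0`, `γ_n → 0`, `√n γ_n → ∞`, one has for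
`i = 1,2` and every `n ≥ 1`:
`Pr{ (1/√n) log(1/P_{Yⁿ}(Yᵢⁿ)) ≥ z_n } ≥ Pr{ (1/√n) log(1/P_{Yᵢⁿ}(Yᵢⁿ)) ≥ z_n + γ_n } − e^{−√n γ_n}`. -/
theorem mixed_source_lemma_first
    {𝒴 : Type*} [Countable 𝒴]
    (P1 P2 : 𝒴 → ℝ) (hP1 : IsPMF P1) (hP2 : IsPMF P2)
    (w1 w2 : ℝ) (hw1 : 0 < w1) (hw2 : 0 < w2) (hw : w1 + w2 = 1)
    (z γ : ℕ → ℝ) (hγanti : StrictAnti γ) (hγpos : ∀ n, 0 < γ n)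
    (hγ0 : Filter.Tendsto γ Filter.atTop (nhds 0))
    (hγtop : Filter.Tendsto (fun n : ℕ => Real.sqrt n * γ n) Filter.atTop Filter.atTop)
    (Pi : 𝒴 → ℝ) (hPi : Pi = P1 ∨ Pi = P2)
    (n : ℕ) (hn : 1 ≤ n) :
    prb (prodP Pi n)
        {y | z n ≤ (1 / Real.sqrt n) * Real.log (1 / mix2 P1 P2 w1 w2 n y)}
      ≥ prb (prodP Pi n)
          {y | z n + γ n ≤ (1 / Real.sqrt n) * Real.log (1 / prodP Pi n y)}
        - Real.exp (-(Real.sqrt n * γ n)) := by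
  classical
  have hPi0 : ∀ a, 0 ≤ Pi a := by rcases hPi with rfl | rfl; exacts [hP1.1, hP2.1]
  have hPi1 : HasSum Pi 1 := by rcases hPi with rfl | rfl; exacts [hP1.2, hP2.2]
  set c : ℝ := Real.exp (-(Real.sqrt n * γ n)) with hc
  have hcpos : 0 < c := Real.exp_pos _
  set Pn : (Fin n → 𝒴) → ℝ := prodP Pi n with hPndef
  set Q : (Fin n → 𝒴) → ℝ := mix2 P1 P2 w1 w2 n with hQdef
  set B : Set (Fin n → 𝒴) := {y | z n ≤ (1 / Real.sqrt n) * Real.log (1 / Q y)} with hBdef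
  set A : Set (Fin n → 𝒴) := {y | z n + γ n ≤ (1 / Real.sqrt n) * Real.log (1 / Pn y)} with hAdef
  have hPn : HasSum Pn 1 := hasSum_prodP hPi0 hPi1 n
  have hPn0 : ∀ y, 0 ≤ Pn y := prodP_nonneg hPi0 n
  have hQ : HasSum Q 1 := by
    have h1 := (hasSum_prodP hP1.1 hP1.2 n).mul_left w1
    have h2 := (hasSum_prodP hP2.1 hP2.2 n).mul_left w2
    have := h1.add h2
    have e : Q = fun b => w1 * prodP P1 n b + w2 * prodP P2 n b := rfl
    rw [e]
    simpa [hw] using this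
  have hQ0 : ∀ y, 0 ≤ Q y := fun y =>
    add_nonneg (mul_nonneg hw1.le (prodP_nonneg hP1.1 n y))
      (mul_nonneg hw2.le (prodP_nonneg hP2.1 n y))
  have hsq : (0 : ℝ) < Real.sqrt n := by
    have : (0 : ℝ) < (n : ℝ) := by exact_mod_cast hn
    exact Real.sqrt_pos.mpr this
  -- key pointwise bound on A \ B
  have hkey : ∀ y, Set.indicator (A \ B) Pn y ≤ c * Q y := by
    intro y
    by_cases hy : y ∈ A \ B
    · rw [Set.indicator_of_mem hy]
      obtain ⟨hA, hB⟩ := hy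
      rcases eq_or_lt_of_le (hPn0 y) with h0 | hpos
      · rw [← h0]; exact mul_nonneg hcpos.le (hQ0 y)
      · have hQpos : 0 < Q y := by
          have hpos' : 0 < prodP Pi n y := by rw [hPndef] at hpos; exact hpos
          rcases hPi with rfl | rfl
          · have h2 : 0 ≤ w2 * prodP P2 n y := mul_nonneg hw2.le (prodP_nonneg hP2.1 n y)
            simp only [hQdef, mix2]
            exact add_pos_of_pos_of_nonneg (mul_pos hw1 hpos') h2
          · have h1 : 0 ≤ w1 * prodP P1 n y := mul_nonneg hw1.le (prodP_nonneg hP1.1 n y)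
            simp only [hQdef, mix2]
            exact add_pos_of_nonneg_of_pos h1 (mul_pos hw2 hpos')
        have hA' : (z n + γ n) * Real.sqrt n ≤ Real.log (1 / Pn y) := by
          have : z n + γ n ≤ (1 / Real.sqrt n) * Real.log (1 / Pn y) := hA
          rw [one_div_mul_eq_div, le_div_iff₀ hsq] at this
          exact this
        have hB' : Real.log (1 / Q y) < z n * Real.sqrt n := by
          have : ¬ (z n ≤ (1 / Real.sqrt n) * Real.log (1 / Q y)) := hB
          push_neg at this
          rw [one_div_mul_eq_div, div_lt_iff₀ hsq] at this
          exact this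
        rw [one_div, Real.log_inv] at hA' hB'
        have hlog : Real.log (Pn y) ≤ Real.log (Q y) - Real.sqrt n * γ n := by
          have hA2 : z n * Real.sqrt n + γ n * Real.sqrt n ≤ -Real.log (Pn y) := by
            rw [add_mul] at hA'; linarith
          have hcomm : Real.sqrt (n : ℝ) * γ n = γ n * Real.sqrt (n : ℝ) := mul_comm _ _
          linarith
        calc Pn y = Real.exp (Real.log (Pn y)) := (Real.exp_log hpos).symm
          _ ≤ Real.exp (Real.log (Q y) - Real.sqrt n * γ n) := Real.exp_le_exp.mpr hlog
          _ = Real.exp (-(Real.sqrt n * γ n)) * Real.exp (Real.log (Q y)) := by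
              rw [← Real.exp_add]; ring_nf
          _ = c * Q y := by rw [Real.exp_log hQpos, hc]
    · rw [Set.indicator_of_notMem hy]
      exact mul_nonneg hcpos.le (hQ0 y)
  have sInd : ∀ s : Set (Fin n → 𝒴), Summable (s.indicator Pn) :=
    fun s => hPn.summable.indicator s
  have hsplit : prb Pn A
      = (∑' y, Set.indicator (A ∩ B) Pn y) + ∑' y, Set.indicator (A \ B) Pn y := by
    unfold prb
    rw [← Summable.tsum_add (sInd _) (sInd _)]
    congr 1
    funext y
    by_cases hB : y ∈ B <;> by_cases hA : y ∈ A <;>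
      simp [Set.indicator_apply, Set.mem_inter_iff, Set.mem_diff, hA, hB]
  have h1 : (∑' y, Set.indicator (A ∩ B) Pn y) ≤ prb Pn B := by
    refine Summable.tsum_le_tsum (fun y => ?_) (sInd _) (sInd _)
    exact Set.indicator_le_indicator_of_subset Set.inter_subset_right hPn0 y
  have h2 : (∑' y, Set.indicator (A \ B) Pn y) ≤ c := by
    calc (∑' y, Set.indicator (A \ B) Pn y) ≤ ∑' y, c * Q y :=
          Summable.tsum_le_tsum hkey (sInd _) (hQ.summable.mul_left c)
      _ = c * 1 := (hQ.mul_left c).tsum_eq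
      _ = c := mul_one c
  have := hsplit
  linarith
end
end

section
/- Let X = {Xⁿ} and Y = {Yⁿ} be arbitrary general sources where Xⁿ and Yⁿ take values in countable sets 𝒳ⁿ and 𝒴ⁿ respectively. Then for every n ≥ 1, every real number z_n, every γ > 0, and every mapping φ_n : 𝒳ⁿ → 𝒴ⁿ, it holds that d(φ_n(Xⁿ), Yⁿ) ≥ 2·Pr{Yⁿ ∉ T_n(z_n + γ)} − 2·Pr{Xⁿ ∈ S_n(z_n)} − 2·e^{−√n·γ}. -/
open Filter MeasureTheory
open scoped BigOperators

noncomputable section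

lemma hasSum_pushMap_s11 {α β : Type*} (f : α → ℝ) (hf : Summable f) (φ : α → β) :
    HasSum (pushMap f φ) (∑' a, f a) := by
  have h1 : HasSum (fun p : (Σ b : β, {a // φ a = b}) => f p.2.1) (∑' a, f a) :=
    ((Equiv.sigmaFiberEquiv φ).hasSum_iff).mpr hf.hasSum
  refine h1.sigma (fun b => ?_)
  have h2 : Summable (fun a : {a | φ a = b} => f a) := hf.subtype _
  have h3 := h2.hasSum
  have h4 : (∑' a : {a | φ a = b}, f a) = pushMap f φ b := by
    rw [tsum_subtype]; rfl
  rw [h4] at h3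
  exact h3

lemma prb_add_compl {α : Type*} {p : α → ℝ} (hp : IsPMF p) (A : Set α) :
    prb p A + prb p Aᶜ = 1 := by
  have h1 : Summable (A.indicator p) := hp.2.summable.indicator A
  have h2 : Summable (Aᶜ.indicator p) := hp.2.summable.indicator Aᶜ
  have h3 : ∀ a, A.indicator p a + Aᶜ.indicator p a = p a := by
    intro a
    by_cases h : a ∈ A <;> simp [h]
  calc prb p A + prb p Aᶜ = ∑' a, (A.indicator p a + Aᶜ.indicator p a) :=
        (Summable.tsum_add h1 h2).symm
    _ = ∑' a, p a := tsum_congr h3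
    _ = 1 := hp.2.tsum_eq

lemma indicator_tsum_sub {α : Type*} {p q : α → ℝ} (hp : Summable p) (hq : Summable q)
    (A : Set α) :
    ∑' a, A.indicator (fun a => q a - p a) a = prb q A - prb p A := by
  have h3 : ∀ a, A.indicator (fun a => q a - p a) a = A.indicator q a - A.indicator p a := by
    intro a; by_cases h : a ∈ A <;> simp [h]
  rw [tsum_congr h3, Summable.tsum_sub (hq.indicator A) (hp.indicator A)]; rfl

lemma varDist_ge {α : Type*} {p q : α → ℝ} (hp : IsPMF p) (hq : IsPMF q) (A : Set α) :
    2 * (prb q A - prb p A) ≤ varDist p q := by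
  have hsf : Summable (fun a => |p a - q a|) := (hp.2.summable.sub hq.2.summable).abs
  have key : ∀ (B : Set α), prb q B - prb p B ≤ ∑' a, B.indicator (fun a => |p a - q a|) a := by
    intro B
    rw [← indicator_tsum_sub hp.2.summable hq.2.summable B]
    refine Summable.tsum_le_tsum (fun a => ?_) ?_ (hsf.indicator B)
    · by_cases h : a ∈ B
      · simp only [Set.indicator_of_mem h]
        rw [abs_sub_comm]; exact le_abs_self _
      · simp [h]
    · exact ((hq.2.summable.sub hp.2.summable).indicator B).congr
        (by intro a; by_cases h : a ∈ B <;> simp [h])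
  have hsplit : varDist p q = (∑' a, A.indicator (fun a => |p a - q a|) a)
      + (∑' a, Aᶜ.indicator (fun a => |p a - q a|) a) := by
    rw [← Summable.tsum_add (hsf.indicator A) (hsf.indicator Aᶜ)]
    exact tsum_congr (fun a => by by_cases h : a ∈ A <;> simp [h])
  have h1 := key A
  have h2 : prb p Aᶜ - prb q Aᶜ ≤ ∑' a, Aᶜ.indicator (fun a => |p a - q a|) a := by
    calc prb p Aᶜ - prb q Aᶜ
        = ∑' a, Aᶜ.indicator (fun a => p a - q a) a := by
          rw [indicator_tsum_sub hq.2.summable hp.2.summable Aᶜ]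
      _ ≤ ∑' a, Aᶜ.indicator (fun a => |p a - q a|) a := by
          refine Summable.tsum_le_tsum (fun a => ?_) ?_ (hsf.indicator Aᶜ)
          · by_cases h : a ∈ Aᶜ
            · simp only [Set.indicator_of_mem h]; exact le_abs_self _
            · simp [h]
          · exact ((hp.2.summable.sub hq.2.summable).indicator Aᶜ).congr
              (by intro a; by_cases h : a ∈ Aᶜ <;> simp [h])
  have hcompl_p : prb p Aᶜ = 1 - prb p A := by linarith [prb_add_compl hp A]
  have hcompl_q : prb q Aᶜ = 1 - prb q A := by linarith [prb_add_compl hq A]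
  rw [hcompl_p, hcompl_q] at h2
  linarith [hsplit ▸ (add_le_add h1 h2)]

lemma prb_pushMap {α β : Type*} (P : α → ℝ) (hP : Summable P) (φ : α → β) (A : Set β) :
    prb (pushMap P φ) A = prb P (φ ⁻¹' A) := by
  have hfun : A.indicator (pushMap P φ) = pushMap ((φ ⁻¹' A).indicator P) φ := by
    funext b
    by_cases hb : b ∈ A
    · rw [Set.indicator_of_mem hb]
      refine tsum_congr (fun a => ?_)
      by_cases ha : φ a = b
      · have ha' : a ∈ {a | φ a = b} := ha
        have haA : a ∈ φ ⁻¹' A := by rw [Set.mem_preimage, ha]; exact hb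
        rw [Set.indicator_of_mem ha', Set.indicator_of_mem ha', Set.indicator_of_mem haA]
      · have ha' : a ∉ {a | φ a = b} := ha
        rw [Set.indicator_of_notMem ha', Set.indicator_of_notMem ha']
    · rw [Set.indicator_of_notMem hb]
      symm
      have hz : ∀ a, Set.indicator {a | φ a = b} ((φ ⁻¹' A).indicator P) a = 0 := by
        intro a
        by_cases ha : a ∈ {a | φ a = b}
        · rw [Set.indicator_of_mem ha, Set.indicator_of_notMem]
          intro hmem
          exact hb (ha ▸ hmem)
        · rw [Set.indicator_of_notMem ha]
      rw [show (pushMap ((φ ⁻¹' A).indicator P) φ b)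
            = ∑' a, Set.indicator {a | φ a = b} ((φ ⁻¹' A).indicator P) a from rfl,
          tsum_congr hz, tsum_zero]
  rw [prb, hfun, (hasSum_pushMap_s11 _ (hP.indicator _) φ).tsum_eq]; rfl

/-- Lemma 2 (Han): for arbitrary general sources `X`, `Y`, every `n ≥ 1`, every real
`z_n`, every `γ > 0` and every mapping `φ_n : 𝒳ⁿ → 𝒴ⁿ`,
`d(φ_n(Xⁿ), Yⁿ) ≥ 2 Pr{Yⁿ ∉ T_n(z_n+γ)} − 2 Pr{Xⁿ ∈ S_n(z_n)} − 2 e^{−√n γ}`,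
where `S_n(c) = {x | (1/√n) log(1/P_{Xⁿ}(x)) ≥ c}` and
`T_n(c) = {y | (1/√n) log(1/P_{Yⁿ}(y)) ≤ c}`. -/
theorem approximation_lemma_converse
    {𝒳 𝒴 : Type*} [Countable 𝒳] [Countable 𝒴]
    (P : 𝒳 → ℝ) (Q : 𝒴 → ℝ) (hP : IsPMF P) (hQ : IsPMF Q)
    (n : ℕ) (hn : 1 ≤ n) (z γ : ℝ) (hγ : 0 < γ)
    (φ : 𝒳 → 𝒴) :
    varDist (pushMap P φ) Q ≥
      2 * prb Q ({y | (1 / Real.sqrt n) * Real.log (1 / Q y) ≤ z + γ}ᶜ)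
        - 2 * prb P {x | z ≤ (1 / Real.sqrt n) * Real.log (1 / P x)}
        - 2 * Real.exp (-(Real.sqrt n * γ)) := by
  classical
  set s := Real.sqrt n with hs_def
  have hs : 0 < s := Real.sqrt_pos.mpr (by exact_mod_cast Nat.lt_of_lt_of_le Nat.zero_lt_one hn)
  set T : Set 𝒴 := {y | (1 / s) * Real.log (1 / Q y) ≤ z + γ} with hT_def
  set S : Set 𝒳 := {x | z ≤ (1 / s) * Real.log (1 / P x)} with hS_def
  set B : Set 𝒳 := {x | x ∉ S ∧ 0 < P x} with hB_def
  have hε : (0:ℝ) < Real.exp (-(s * z)) := Real.exp_pos _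
  -- B consists of points with mass exceeding exp(-(s z))
  have hBsub : B ⊆ {x | Real.exp (-(s * z)) ≤ P x} := by
    intro x hx
    obtain ⟨hxS, hxP⟩ := hx
    have h1 : (1 / s) * Real.log (1 / P x) < z := lt_of_not_ge hxS
    have h2 : Real.log (1 / P x) < s * z := by
      have h3 := (mul_lt_mul_iff_right₀ hs).mpr h1
      have h4 : s * ((1 / s) * Real.log (1 / P x)) = Real.log (1 / P x) := by
        field_simp
      linarith [h4 ▸ h3]
    have h5 : -(s * z) < Real.log (P x) := by
      rw [one_div, Real.log_inv] at h2
      linarith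
    have h6 : Real.exp (-(s * z)) < Real.exp (Real.log (P x)) := Real.exp_lt_exp.mpr h5
    rw [Real.exp_log hxP] at h6
    exact h6.le
  -- B is finite
  have hfin : {x | Real.exp (-(s * z)) ≤ P x}.Finite := by
    have h := hP.2.summable.tendsto_cofinite_zero
    have h2 : ∀ᶠ x in Filter.cofinite, P x < Real.exp (-(s * z)) :=
      h.eventually (eventually_lt_nhds hε)
    have h3 := Filter.eventually_cofinite.mp h2
    exact h3.subset (fun x hx => not_lt.mpr hx)
  have hBfin : B.Finite := hfin.subset hBsub
  set F := hBfin.toFinset with hF_def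
  -- cardinality bound
  have hcard : (F.card : ℝ) * Real.exp (-(s * z)) ≤ 1 := by
    have h1 : ∀ x ∈ F, Real.exp (-(s * z)) ≤ P x := by
      intro x hx
      exact hBsub (hBfin.mem_toFinset.mp hx)
    have h2 : F.card • Real.exp (-(s * z)) ≤ ∑ x ∈ F, P x :=
      Finset.card_nsmul_le_sum F _ _ h1
    have h3 : ∑ x ∈ F, P x ≤ 1 := by
      have h4 := Summable.sum_le_tsum F (fun x _ => hP.1 x) hP.2.summable
      rwa [hP.2.tsum_eq] at h4
    rw [nsmul_eq_mul] at h2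
    linarith
  have hcard2 : (F.card : ℝ) ≤ Real.exp (s * z) := by
    have h := mul_le_mul_of_nonneg_right hcard (Real.exp_pos (s * z)).le
    rwa [one_mul, mul_assoc, ← Real.exp_add, neg_add_cancel, Real.exp_zero, mul_one] at h
  -- the test set
  set A : Set 𝒴 := Tᶜ \ (φ '' B) with hA_def
  -- pushforward is a PMF
  have hpush : IsPMF (pushMap P φ) := by
    constructor
    · intro b
      exact tsum_nonneg (fun a => Set.indicator_apply_nonneg (fun _ => hP.1 a))
    · have := hasSum_pushMap_s11 P hP.2.summable φ
      rwa [hP.2.tsum_eq] at this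
  -- bound on the pushforward mass of A
  have hpushA : prb (pushMap P φ) A ≤ prb P S := by
    rw [prb_pushMap P hP.2.summable φ A]
    refine Summable.tsum_le_tsum (fun a => ?_) (hP.2.summable.indicator _) (hP.2.summable.indicator _)
    by_cases ha : a ∈ φ ⁻¹' A
    · rw [Set.indicator_of_mem ha]
      have haB : a ∉ B := by
        intro hB'
        exact (Set.mem_preimage.mp ha).2 ⟨a, hB', rfl⟩
      by_cases haS : a ∈ S
      · rw [Set.indicator_of_mem haS]
      · have hPa : P a = 0 :=
          le_antisymm (not_lt.mp (fun h => haB ⟨haS, h⟩)) (hP.1 a)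
        rw [hPa]
        exact Set.indicator_apply_nonneg (fun _ => hP.1 a)
    · rw [Set.indicator_of_notMem ha]
      exact Set.indicator_apply_nonneg (fun _ => hP.1 a)
  -- Q-bound on points outside T
  have hQbound : ∀ y ∈ Tᶜ, Q y ≤ Real.exp (-(s * (z + γ))) := by
    intro y hy
    have h1 : z + γ < (1 / s) * Real.log (1 / Q y) := lt_of_not_ge hy
    rcases eq_or_lt_of_le (hQ.1 y) with hQy | hQy
    · rw [← hQy]; exact (Real.exp_pos _).le
    · have h2 : s * (z + γ) < Real.log (1 / Q y) := by
        have h3 := (mul_lt_mul_iff_right₀ hs).mpr h1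
        have h4 : s * ((1 / s) * Real.log (1 / Q y)) = Real.log (1 / Q y) := by
          field_simp
        linarith [h4 ▸ h3]
      have h5 : Real.log (Q y) < -(s * (z + γ)) := by
        rw [one_div, Real.log_inv] at h2
        linarith
      have h6 := Real.exp_lt_exp.mpr h5
      rw [Real.exp_log hQy] at h6
      exact h6.le
  -- Q-mass of Tᶜ ∩ φ '' B is small
  have hsmall : prb Q (Tᶜ ∩ φ '' B) ≤ Real.exp (-(s * γ)) := by
    set G := F.image φ with hG_def
    have hGsub : ∀ y, y ∉ G → (Tᶜ ∩ φ '' B).indicator Q y = 0 := by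
      intro y hy
      apply Set.indicator_of_notMem
      rintro ⟨-, x, hxB, rfl⟩
      exact hy (Finset.mem_image.mpr ⟨x, hBfin.mem_toFinset.mpr hxB, rfl⟩)
    have heq : prb Q (Tᶜ ∩ φ '' B) = ∑ y ∈ G, (Tᶜ ∩ φ '' B).indicator Q y :=
      tsum_eq_sum (fun y hy => hGsub y hy)
    have hle : ∑ y ∈ G, (Tᶜ ∩ φ '' B).indicator Q y
        ≤ ∑ _y ∈ G, Real.exp (-(s * (z + γ))) := by
      refine Finset.sum_le_sum (fun y _ => ?_)
      by_cases hy : y ∈ Tᶜ ∩ φ '' B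
      · rw [Set.indicator_of_mem hy]
        exact hQbound y hy.1
      · rw [Set.indicator_of_notMem hy]
        exact (Real.exp_pos _).le
    have hsum : ∑ _y ∈ G, Real.exp (-(s * (z + γ)))
        = (G.card : ℝ) * Real.exp (-(s * (z + γ))) := by
      rw [Finset.sum_const, nsmul_eq_mul]
    have hcardG : (G.card : ℝ) ≤ (F.card : ℝ) := by
      exact_mod_cast Finset.card_image_le
    have hfinal : (G.card : ℝ) * Real.exp (-(s * (z + γ)))
        ≤ Real.exp (s * z) * Real.exp (-(s * (z + γ))) :=
      mul_le_mul_of_nonneg_right (le_trans hcardG hcard2) (Real.exp_pos _).le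
    have hexp : Real.exp (s * z) * Real.exp (-(s * (z + γ))) = Real.exp (-(s * γ)) := by
      rw [← Real.exp_add]
      ring_nf
    calc prb Q (Tᶜ ∩ φ '' B) = ∑ y ∈ G, (Tᶜ ∩ φ '' B).indicator Q y := heq
      _ ≤ ∑ _y ∈ G, Real.exp (-(s * (z + γ))) := hle
      _ = (G.card : ℝ) * Real.exp (-(s * (z + γ))) := hsum
      _ ≤ Real.exp (s * z) * Real.exp (-(s * (z + γ))) := hfinal
      _ = Real.exp (-(s * γ)) := hexp
  -- subadditivity: Q(Tᶜ) ≤ Q(A) + Q(Tᶜ ∩ φ '' B)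
  have hsub : prb Q Tᶜ ≤ prb Q A + prb Q (Tᶜ ∩ φ '' B) := by
    have h1 : ∀ y, Tᶜ.indicator Q y ≤ A.indicator Q y + (Tᶜ ∩ φ '' B).indicator Q y := by
      intro y
      by_cases hy : y ∈ Tᶜ
      · by_cases hy2 : y ∈ φ '' B
        · rw [Set.indicator_of_mem hy, Set.indicator_of_mem (Set.mem_inter hy hy2)]
          have := Set.indicator_apply_nonneg (s := A) (fun _ => hQ.1 y) (a := y)
          linarith
        · rw [Set.indicator_of_mem hy, Set.indicator_of_mem (show y ∈ A from ⟨hy, hy2⟩)]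
          have := Set.indicator_apply_nonneg (s := Tᶜ ∩ φ '' B) (fun _ => hQ.1 y) (a := y)
          linarith
      · rw [Set.indicator_of_notMem hy]
        have h2 := Set.indicator_apply_nonneg (s := A) (fun _ => hQ.1 y) (a := y)
        have h3 := Set.indicator_apply_nonneg (s := Tᶜ ∩ φ '' B) (fun _ => hQ.1 y) (a := y)
        linarith
    have h4 := Summable.tsum_le_tsum h1 (hQ.2.summable.indicator _)
      ((hQ.2.summable.indicator A).add (hQ.2.summable.indicator _))
    rwa [Summable.tsum_add (hQ.2.summable.indicator A) (hQ.2.summable.indicator _)] at h4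
  -- conclude
  have hmain := varDist_ge hpush hQ A
  have hfinal : prb Q Tᶜ - Real.exp (-(s * γ)) - prb P S
      ≤ prb Q A - prb (pushMap P φ) A := by
    have := hsmall
    linarith
  linarith
end
end
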